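/- arXiv:2307.00177 — 3 statements merged into one kernel-verified Lean document; each statement's English description precedes it below -/
import Mathlib

section
/- Let A → B → C → D be an exact sequence of graded R[t]-modules. If t^(2ε)·A = 0 and t^(2ε)·D = 0, then B and C are 4ε-interleaved: there exist homomorphisms φ : B → C and ψ : C → B, each shifting degree by 4ε, such that ψ ∘ φ equals multiplication by t^(8ε) on B and φ ∘ ψ equals multiplication by t^(8ε) on C. -/
open Polynomial

private lemma pow_smul_mem_aux {R : Type} [CommRing R] {M : Type} [AddCommGroup M]
    [Module (Polynomial R) M] (𝒢 : ℤ → AddSubgroup M)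
    (hX : ∀ (k : ℤ), ∀ m ∈ 𝒢 k, (X : Polynomial R) • m ∈ 𝒢 (k + 1)) :
    ∀ (n : ℕ) (k : ℤ), ∀ m ∈ 𝒢 k, (X ^ n : Polynomial R) • m ∈ 𝒢 (k + n) := by
  intro n
  induction n with
  | zero => intro k m hm; simpa using hm
  | succ n ih =>
      intro k m hm
      have h1 := hX k m hm
      have h2 := ih (k + 1) _ h1
      have : (X ^ (n + 1) : Polynomial R) • m = (X ^ n : Polynomial R) • ((X : Polynomial R) • m) := by
        rw [← mul_smul, ← pow_succ]
      rw [this]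
      convert h2 using 2
      push_cast; ring

/-- Let `A → B → C → D` be an exact sequence of graded `R[t]`-modules.
If `t^(2ε) • A = 0` and `t^(2ε) • D = 0`, then `B` and `C` are `4ε`-interleaved:
there are homomorphisms `φ : B → C` and `ψ : C → B`, each shifting degree by `4ε`,
with `ψ ∘ φ` equal to multiplication by `t^(8ε)` on `B` and `φ ∘ ψ` equal to
multiplication by `t^(8ε)` on `C`. -/
theorem stmt_6 {R : Type} [CommRing R]
    {A B C' D : Type} [AddCommGroup A] [AddCommGroup B] [AddCommGroup C'] [AddCommGroup D]
    [Module (Polynomial R) A] [Module (Polynomial R) B]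
    [Module (Polynomial R) C'] [Module (Polynomial R) D]
    (𝒜 : ℤ → AddSubgroup A) (ℬ : ℤ → AddSubgroup B)
    (𝒞 : ℤ → AddSubgroup C') (𝒟 : ℤ → AddSubgroup D)
    (hAint : DirectSum.IsInternal 𝒜) (hBint : DirectSum.IsInternal ℬ)
    (hCint : DirectSum.IsInternal 𝒞) (hDint : DirectSum.IsInternal 𝒟)
    (hAC : ∀ (r : R) (k : ℤ), ∀ a ∈ 𝒜 k, (C r : Polynomial R) • a ∈ 𝒜 k)
    (hBC : ∀ (r : R) (k : ℤ), ∀ b ∈ ℬ k, (C r : Polynomial R) • b ∈ ℬ k)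
    (hCC : ∀ (r : R) (k : ℤ), ∀ c ∈ 𝒞 k, (C r : Polynomial R) • c ∈ 𝒞 k)
    (hDC : ∀ (r : R) (k : ℤ), ∀ d ∈ 𝒟 k, (C r : Polynomial R) • d ∈ 𝒟 k)
    (hAX : ∀ (k : ℤ), ∀ a ∈ 𝒜 k, (X : Polynomial R) • a ∈ 𝒜 (k + 1))
    (hBX : ∀ (k : ℤ), ∀ b ∈ ℬ k, (X : Polynomial R) • b ∈ ℬ (k + 1))
    (hCX : ∀ (k : ℤ), ∀ c ∈ 𝒞 k, (X : Polynomial R) • c ∈ 𝒞 (k + 1))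
    (hDX : ∀ (k : ℤ), ∀ d ∈ 𝒟 k, (X : Polynomial R) • d ∈ 𝒟 (k + 1))
    (f : A →ₗ[Polynomial R] B) (φ : B →ₗ[Polynomial R] C') (g : C' →ₗ[Polynomial R] D)
    (hfg : ∀ (k : ℤ), ∀ a ∈ 𝒜 k, f a ∈ ℬ k)
    (hφg : ∀ (k : ℤ), ∀ b ∈ ℬ k, φ b ∈ 𝒞 k)
    (hgg : ∀ (k : ℤ), ∀ c ∈ 𝒞 k, g c ∈ 𝒟 k)
    (hexB : LinearMap.range f = LinearMap.ker φ)
    (hexC : LinearMap.range φ = LinearMap.ker g)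
    (ε : ℕ)
    (hA : ∀ a : A, (X ^ (2 * ε) : Polynomial R) • a = 0)
    (hD : ∀ d : D, (X ^ (2 * ε) : Polynomial R) • d = 0) :
    ∃ (u : B →ₗ[Polynomial R] C') (v : C' →ₗ[Polynomial R] B),
      (∀ (k : ℤ), ∀ b ∈ ℬ k, u b ∈ 𝒞 (k + 4 * (ε : ℤ))) ∧
      (∀ (k : ℤ), ∀ c ∈ 𝒞 k, v c ∈ ℬ (k + 4 * (ε : ℤ))) ∧
      (∀ b : B, v (u b) = (X ^ (8 * ε) : Polynomial R) • b) ∧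
      (∀ c : C', u (v c) = (X ^ (8 * ε) : Polynomial R) • c) := by
  classical
  -- X^{2ε} kills the kernel of φ
  have hker0 : ∀ b ∈ LinearMap.ker φ, (X ^ (2 * ε) : Polynomial R) • b = 0 := by
    intro b hb
    rw [← hexB] at hb
    obtain ⟨a, rfl⟩ := hb
    rw [← map_smul, hA, map_zero]
  -- X^{2ε} • c lies in the range of φ
  have hrange : ∀ c : C', (X ^ (2 * ε) : Polynomial R) • c ∈ LinearMap.range φ := by
    intro c
    rw [hexC]
    simp only [LinearMap.mem_ker, map_smul, hD]
  -- key graded lemma: if φ b is homogeneous of degree j then X^{2ε} • b ∈ ℬ (j + 2ε)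
  have key : ∀ (b : B) (j : ℤ), φ b ∈ 𝒞 j →
      (X ^ (2 * ε) : Polynomial R) • b ∈ ℬ (j + (2 * ε : ℕ)) := by
    intro b j hj
    set d := (Equiv.ofBijective _ hBint).symm b with hd
    have hb' : DirectSum.coeAddMonoidHom ℬ d = b :=
      (Equiv.ofBijective _ hBint).apply_symm_apply b
    have hsum : ∑ i ∈ d.support, ((d i : B)) = b := by
      calc ∑ i ∈ d.support, ((d i : B))
          = ∑ i ∈ d.support, DirectSum.coeAddMonoidHom ℬ (DirectSum.of _ i (d i)) := by
            simp [DirectSum.coeAddMonoidHom_of]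
        _ = DirectSum.coeAddMonoidHom ℬ (∑ i ∈ d.support, DirectSum.of _ i (d i)) := by
            rw [map_sum]
        _ = b := by rw [DirectSum.sum_support_of]; exact hb'
    -- the componentwise image under φ
    let φ' : ∀ i : ℤ, ℬ i →+ 𝒞 i := fun i =>
      { toFun := fun x => ⟨φ x, hφg i x x.2⟩
        map_zero' := by apply Subtype.ext; simp
        map_add' := by intros; apply Subtype.ext; simp }
    let ζ : DirectSum ℤ fun i => 𝒞 i := DFinsupp.mapRange.addMonoidHom φ' d
    have hcomm : ∀ x : DirectSum ℤ fun i => ℬ i,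
        DirectSum.coeAddMonoidHom 𝒞 (DFinsupp.mapRange.addMonoidHom φ' x)
          = φ (DirectSum.coeAddMonoidHom ℬ x) := by
      intro x
      induction x using DirectSum.induction_on with
      | zero => simp only [AddMonoidHom.map_zero, LinearMap.map_zero]
      | of i y =>
          rw [show (DirectSum.of (fun i => ℬ i) i y) = DFinsupp.single i y from rfl]
          rw [DFinsupp.mapRange.addMonoidHom_apply, DFinsupp.mapRange_single]
          rw [show (DFinsupp.single i (φ' i y) : DirectSum ℤ fun i => 𝒞 i)
            = DirectSum.of (fun i => 𝒞 i) i (φ' i y) from rfl]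
          rw [show (DFinsupp.single i y : DirectSum ℤ fun i => ℬ i)
            = DirectSum.of (fun i => ℬ i) i y from rfl]
          rw [DirectSum.coeAddMonoidHom_of, DirectSum.coeAddMonoidHom_of]
          rfl
      | add a b ha hb => simp only [AddMonoidHom.map_add, LinearMap.map_add, ha, hb]
    have hζ : ζ = DirectSum.of (fun i => 𝒞 i) j ⟨φ b, hj⟩ := by
      apply hCint.injective
      rw [DirectSum.coeAddMonoidHom_of]
      show DirectSum.coeAddMonoidHom 𝒞 (DFinsupp.mapRange.addMonoidHom φ' d) = φ b
      rw [hcomm, hb']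
    have hcomp0 : ∀ i : ℤ, i ≠ j → φ (d i : B) = 0 := by
      intro i hi
      have h0 : ζ i = 0 := by rw [hζ]; exact DirectSum.of_eq_of_ne _ _ _ hi
      have h1 : (ζ i : C') = φ (d i : B) := by
        show ((DFinsupp.mapRange.addMonoidHom φ' d) i : C') = _
        rw [DFinsupp.mapRange.addMonoidHom_apply, DFinsupp.mapRange_apply]
        rfl
      rw [h0] at h1
      simpa using h1.symm
    have hXb : (X ^ (2 * ε) : Polynomial R) • b = (X ^ (2 * ε) : Polynomial R) • (d j : B) := by
      conv_lhs => rw [← hsum]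
      rw [Finset.smul_sum]
      apply Finset.sum_eq_single
      · intro i hi hij
        apply hker0
        rw [LinearMap.mem_ker]
        exact hcomp0 i hij
      · intro hj'
        rw [DFinsupp.notMem_support_iff.mp hj']
        simp
    rw [hXb]
    exact pow_smul_mem_aux ℬ hBX (2 * ε) j _ (d j).2
  -- the forward map
  let u : B →ₗ[Polynomial R] C' := (X ^ (4 * ε) : Polynomial R) • φ
  -- the backward map
  have hKle : LinearMap.ker φ ≤
      LinearMap.ker ((X ^ (2 * ε) : Polynomial R) • (LinearMap.id : B →ₗ[Polynomial R] B)) := by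
    intro b hb
    rw [LinearMap.mem_ker, LinearMap.smul_apply, LinearMap.id_apply]
    exact hker0 b hb
  let t2bar : (B ⧸ LinearMap.ker φ) →ₗ[Polynomial R] B := Submodule.liftQ _ _ hKle
  let e := φ.quotKerEquivRange
  let m : C' →ₗ[Polynomial R] LinearMap.range φ :=
    LinearMap.codRestrict _ ((X ^ (2 * ε) : Polynomial R) • LinearMap.id) (fun c => by
      simpa using hrange c)
  let v : C' →ₗ[Polynomial R] B := t2bar ∘ₗ e.symm.toLinearMap ∘ₗ m
  have hv : ∀ (c : C') (b : B), φ b = (X ^ (2 * ε) : Polynomial R) • c →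
      v c = (X ^ (2 * ε) : Polynomial R) • b := by
    intro c b hb
    have h1 : e (Submodule.Quotient.mk b) = m c := by
      apply Subtype.ext
      rw [LinearMap.quotKerEquivRange_apply_mk]
      simp only [m, LinearMap.codRestrict_apply, LinearMap.smul_apply, LinearMap.id_apply]
      exact hb
    have h2 : e.symm (m c) = Submodule.Quotient.mk b := by
      rw [← h1, LinearEquiv.symm_apply_apply]
    show t2bar (e.symm (m c)) = _
    rw [h2]
    simp [t2bar, Submodule.liftQ_apply]
  have hu : ∀ b : B, u b = (X ^ (4 * ε) : Polynomial R) • φ b := fun b => rfl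
  refine ⟨u, v, ?_, ?_, ?_, ?_⟩
  · intro k b hb
    rw [hu]
    have h := pow_smul_mem_aux 𝒞 hCX (4 * ε) k (φ b) (hφg k b hb)
    have hcast : k + 4 * (ε : ℤ) = k + ((4 * ε : ℕ) : ℤ) := by push_cast; ring
    rw [hcast]
    exact h
  · intro k c hc
    obtain ⟨b, hb⟩ := hrange c
    rw [hv c b hb]
    have hjc : φ b ∈ 𝒞 (k + (2 * ε : ℕ)) := by
      rw [hb]; exact pow_smul_mem_aux 𝒞 hCX (2 * ε) k c hc
    have h := key b _ hjc
    have hcast : k + 4 * (ε : ℤ) = (k + ((2 * ε : ℕ) : ℤ)) + ((2 * ε : ℕ) : ℤ) := by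
      push_cast; ring
    rw [hcast]
    exact h
  · intro b
    have hφ6 : φ ((X ^ (6 * ε) : Polynomial R) • b)
        = (X ^ (2 * ε) : Polynomial R) • u b := by
      rw [map_smul, hu, smul_smul, ← pow_add]
      congr 2
      ring
    rw [hv (u b) _ hφ6, smul_smul, ← pow_add]
    congr 2
    ring
  · intro c
    obtain ⟨b, hb⟩ := hrange c
    rw [hv c b hb, hu, map_smul, hb, smul_smul, smul_smul, ← pow_add, ← pow_add]
    congr 2
    ring
end

section
/- Persistent order extension principle: let I be a linearly ordered set and X : I → Pos a functor (a persistence poset, i.e., a family of posets X_i with monotone structure maps φ_{ij} : X_i → X_j for i ≤ j satisfying φ_{ii} = id and φ_{jk} ∘ φ_{ij} = φ_{ik}). Then there exists a family of linear orders on the underlying sets of the X_i, each extending the original partial order, such that every structure map φ_{ij} remains monotone with respect to these linear orders. -/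
/-- Auxiliary extension step: given a good family of relations `m` and two elements
`a b : X i₀` such that pushing forward never creates a strict comparison `φ b < φ a`,
we can enlarge `m` to a good family in which `a ≤ b`. -/
private lemma stmt_11_step {I : Type} [LinearOrder I]
    (X : I → Type)
    (φ : ∀ i j, i ≤ j → X i → X j)
    (hid : ∀ i (a : X i), φ i i le_rfl a = a)
    (hcomp : ∀ i j k (hij : i ≤ j) (hjk : j ≤ k) (a : X i),
      φ j k hjk (φ i j hij a) = φ i k (hij.trans hjk) a)
    (m : ∀ i, X i → X i → Prop)
    (hrefl : ∀ i (x : X i), m i x x)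
    (htrans : ∀ i (x y z : X i), m i x y → m i y z → m i x z)
    (hanti : ∀ i (x y : X i), m i x y → m i y x → x = y)
    (hmono : ∀ i j (h : i ≤ j) (x y : X i), m i x y → m j (φ i j h x) (φ i j h y))
    (i₀ : I) (a b : X i₀)
    (hdir : ∀ j (h : i₀ ≤ j), m j (φ i₀ j h b) (φ i₀ j h a) → m j (φ i₀ j h a) (φ i₀ j h b)) :
    ∃ r : ∀ i, X i → X i → Prop,
      (∀ i (x y : X i), m i x y → r i x y) ∧ r i₀ a b ∧
      (∀ i (x y z : X i), r i x y → r i y z → r i x z) ∧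
      (∀ i (x y : X i), r i x y → r i y x → x = y) ∧
      (∀ i j (h : i ≤ j) (x y : X i), r i x y → r j (φ i j h x) (φ i j h y)) := by
  refine ⟨fun j x y => m j x y ∨ ∃ h : i₀ ≤ j, m j x (φ i₀ j h a) ∧ m j (φ i₀ j h b) y,
    fun i x y h => Or.inl h, ?_, ?_, ?_, ?_⟩
  · refine Or.inr ⟨le_rfl, ?_, ?_⟩
    · rw [hid]; exact hrefl _ _
    · rw [hid]; exact hrefl _ _
  · rintro i x y z (hxy | ⟨h, hxa, hby⟩) (hyz | ⟨h', hya, hbz⟩)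
    · exact Or.inl (htrans _ _ _ _ hxy hyz)
    · exact Or.inr ⟨h', htrans _ _ _ _ hxy hya, hbz⟩
    · exact Or.inr ⟨h, hxa, htrans _ _ _ _ hby hyz⟩
    · -- φ b ≤ y ≤ φ a, so φ b ≤ φ a, hence φ a ≤ φ b by hdir
      have hba : m i (φ i₀ i h b) (φ i₀ i h a) := htrans _ _ _ _ hby hya
      have hab := hdir i h hba
      exact Or.inl (htrans _ _ _ _ hxa (htrans _ _ _ _ hab hbz))
  · rintro i x y (hxy | ⟨h, hxa, hby⟩) (hyx | ⟨h', hya, hbx⟩)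
    · exact hanti _ _ _ hxy hyx
    · have hba : m i (φ i₀ i h' b) (φ i₀ i h' a) := htrans _ _ _ _ hbx (htrans _ _ _ _ hxy hya)
      have hab := hdir i h' hba
      exact hanti _ _ _ hxy (htrans _ _ _ _ hya (htrans _ _ _ _ hab hbx))
    · have hba : m i (φ i₀ i h b) (φ i₀ i h a) := htrans _ _ _ _ hby (htrans _ _ _ _ hyx hxa)
      have hab := hdir i h hba
      exact hanti _ _ _ (htrans _ _ _ _ hxa (htrans _ _ _ _ hab hby)) hyx
    · have hba : m i (φ i₀ i h b) (φ i₀ i h a) := htrans _ _ _ _ hby hya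
      have hab := hdir i h hba
      exact hanti _ _ _ (htrans _ _ _ _ hxa (htrans _ _ _ _ hab hby))
        (htrans _ _ _ _ hya (htrans _ _ _ _ hab hbx))
  · rintro i j hij x y (hxy | ⟨h, hxa, hby⟩)
    · exact Or.inl (hmono _ _ _ _ _ hxy)
    · refine Or.inr ⟨h.trans hij, ?_, ?_⟩
      · have := hmono _ _ hij _ _ hxa
        rwa [hcomp] at this
      · have := hmono _ _ hij _ _ hby
        rwa [hcomp] at this

/-- Persistent order extension principle.  Let `I` be a linearly ordered
set and `X : I → Pos` a persistence poset: a family of posets `X i` with monotone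
structure maps `φ i j : X i → X j` for `i ≤ j` satisfying `φ i i = id` and
`φ j k ∘ φ i j = φ i k`.  Then there is a family of linear orders on the `X i`, each
extending the original partial order, with respect to which every structure map is
still monotone. -/
theorem stmt_11 {I : Type} [LinearOrder I]
    (X : I → Type) (P : ∀ i, PartialOrder (X i))
    (φ : ∀ i j, i ≤ j → X i → X j)
    (hmono : ∀ i j (h : i ≤ j) (a b : X i), (P i).le a b → (P j).le (φ i j h a) (φ i j h b))
    (hid : ∀ i (a : X i), φ i i le_rfl a = a)
    (hcomp : ∀ i j k (hij : i ≤ j) (hjk : j ≤ k) (a : X i),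
      φ j k hjk (φ i j hij a) = φ i k (hij.trans hjk) a) :
    ∃ L : ∀ i, LinearOrder (X i),
      (∀ i (a b : X i), (P i).le a b → (L i).le a b) ∧
      (∀ i j (h : i ≤ j) (a b : X i), (L i).le a b → (L j).le (φ i j h a) (φ i j h b)) := by
  classical
  -- the set of "good" families of relations
  set Good : Set (∀ i, X i → X i → Prop) :=
    {r | (∀ i (x y : X i), (P i).le x y → r i x y) ∧
         (∀ i (x y z : X i), r i x y → r i y z → r i x z) ∧
         (∀ i (x y : X i), r i x y → r i y x → x = y) ∧
         (∀ i j (h : i ≤ j) (x y : X i), r i x y → r j (φ i j h x) (φ i j h y))} with hGood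
  have hP : (fun i (x y : X i) => (P i).le x y) ∈ Good := by
    refine ⟨fun i x y h => h, fun i x y z h1 h2 => (P i).le_trans _ _ _ h1 h2,
      fun i x y h1 h2 => (P i).le_antisymm _ _ h1 h2, hmono⟩
  -- Zorn's lemma
  have hub : ∀ c ⊆ Good, IsChain (· ≤ ·) c → ∀ y ∈ c,
      ∃ ub ∈ Good, ∀ z ∈ c, z ≤ ub := by
    intro c hcG hc y hy
    refine ⟨fun i x z => ∃ r ∈ c, r i x z, ?_, ?_⟩
    · refine ⟨fun i x z h => ⟨y, hy, (hcG hy).1 i x z h⟩, ?_, ?_, ?_⟩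
      · rintro i x z w ⟨r, hr, hxz⟩ ⟨r', hr', hzw⟩
        rcases hc.total hr hr' with hle | hle
        · exact ⟨r', hr', (hcG hr').2.1 i x z w (hle i x z hxz) hzw⟩
        · exact ⟨r, hr, (hcG hr).2.1 i x z w hxz (hle i z w hzw)⟩
      · rintro i x z ⟨r, hr, hxz⟩ ⟨r', hr', hzx⟩
        rcases hc.total hr hr' with hle | hle
        · exact (hcG hr').2.2.1 i x z (hle i x z hxz) hzx
        · exact (hcG hr).2.2.1 i x z hxz (hle i z x hzx)
      · rintro i j h x z ⟨r, hr, hxz⟩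
        exact ⟨r, hr, (hcG hr).2.2.2 i j h x z hxz⟩
    · intro r hr i x z hxz
      exact ⟨r, hr, hxz⟩
  obtain ⟨m, -, hmG, hmax⟩ := zorn_le_nonempty₀ Good hub _ hP
  obtain ⟨hext, htrans, hanti, hmonom⟩ := hmG
  have hrefl : ∀ i (x : X i), m i x x := fun i x => hext i x x ((P i).le_refl x)
  -- maximal good family is total at every index
  have htotal : ∀ i (x y : X i), m i x y ∨ m i y x := by
    intro i₀ a b
    by_contra hcon
    push_neg at hcon
    obtain ⟨hab, hba⟩ := hcon
    -- decide the direction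
    by_cases hdir : ∀ j (h : i₀ ≤ j), m j (φ i₀ j h b) (φ i₀ j h a) → m j (φ i₀ j h a) (φ i₀ j h b)
    · obtain ⟨r, hmr, hrab, hrtrans, hranti, hrmono⟩ :=
        stmt_11_step X φ hid hcomp m hrefl htrans hanti hmonom i₀ a b hdir
      have hrG : r ∈ Good := ⟨fun i x y h => hmr i x y (hext i x y h), hrtrans, hranti, hrmono⟩
      have hle : m ≤ r := fun i x y => hmr i x y
      have : r ≤ m := hmax hrG hle
      exact hab (this i₀ a b hrab)
    · push_neg at hdir
      obtain ⟨j, hj, hba', hnab⟩ := hdir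
      -- the opposite direction works for (b, a)
      have hdir' : ∀ k (h : i₀ ≤ k), m k (φ i₀ k h a) (φ i₀ k h b) → m k (φ i₀ k h b) (φ i₀ k h a) := by
        intro k hk hab'
        rcases le_total j k with hjk | hkj
        · have := hmonom j k hjk _ _ hba'
          rwa [hcomp, hcomp] at this
        · have := hmonom k j hkj _ _ hab'
          rw [hcomp, hcomp] at this
          exact absurd this hnab
      obtain ⟨r, hmr, hrba, hrtrans, hranti, hrmono⟩ :=
        stmt_11_step X φ hid hcomp m hrefl htrans hanti hmonom i₀ b a hdir'
      have hrG : r ∈ Good := ⟨fun i x y h => hmr i x y (hext i x y h), hrtrans, hranti, hrmono⟩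
      have hle : m ≤ r := fun i x y => hmr i x y
      have : r ≤ m := hmax hrG hle
      exact hba (this i₀ b a hrba)
  refine ⟨fun i =>
    { le := m i
      lt := fun x y => m i x y ∧ ¬ m i y x
      le_refl := hrefl i
      le_trans := htrans i
      lt_iff_le_not_ge := fun _ _ => Iff.rfl
      le_antisymm := hanti i
      le_total := htotal i
      toDecidableLE := Classical.decRel _ }, ?_, ?_⟩
  · exact hext
  · intro i j h a b hab
    exact hmonom i j h a b hab
end

section
/- Left propagation of linear extension: let X be a persistence poset indexed by a converse well-founded linear order I, and suppose there is a maximal index i such that X_j is empty for all j > i. Then X admits a linear extension, i.e., compatible linear refinements of all component orders under which all structure maps remain monotone. -/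
noncomputable section Stmt13Aux

variable {I : Type} [LinearOrder I] [WellFoundedGT I]

/-- Build a `LinearOrder` from a relation satisfying `IsLinearOrder`. -/
noncomputable def mkLin {α : Type} (s : α → α → Prop) (h : IsLinearOrder α s) : LinearOrder α where
  le := s
  lt := fun a b => s a b ∧ ¬ s b a
  le_refl := h.1.1.1.1
  le_trans := h.1.1.2.1
  le_antisymm := h.1.2.1
  le_total := h.2.1
  lt_iff_le_not_ge := fun _ _ => Iff.rfl
  toDecidableLE := Classical.decRel s

@[simp] lemma mkLin_le {α : Type} (s : α → α → Prop) (h : IsLinearOrder α s) :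
    (mkLin s h).le = s := rfl

section Defs

variable (X : I → Type) (P : ∀ i, PartialOrder (X i)) (φ : ∀ i j, i ≤ j → X i → X j)

def relF (i : I) (rec : ∀ j, j > i → LinearOrder (X j)) : X i → X i → Prop :=
  fun a b => (P i).le a b ∨ ∃ j, ∃ h : i < j, (rec j h).lt (φ i j h.le a) (φ i j h.le b)

noncomputable def Fstep (i : I) (rec : ∀ j, j > i → LinearOrder (X j)) : LinearOrder (X i) :=
  @dite _ (IsPartialOrder (X i) (relF X P φ i rec)) (Classical.propDecidable _)
    (fun hp => mkLin _ (Classical.choose_spec (@extend_partialOrder _ (relF X P φ i rec) hp)).1)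
    (fun _ => mkLin _ (Classical.choose_spec
      (@extend_partialOrder _ (P i).le (by letI := P i; infer_instance))).1)

noncomputable def LL : ∀ i, LinearOrder (X i) :=
  (wellFounded_gt (α := I)).fix (Fstep X P φ)

def rel (i : I) : X i → X i → Prop := relF X P φ i (fun j _ => LL X P φ j)

lemma LL_eq (i : I) : LL X P φ i = Fstep X P φ i (fun j _ => LL X P φ j) :=
  (wellFounded_gt (α := I)).fix_eq _ i

lemma ext_le (i : I) (a b : X i) (hab : (P i).le a b) : (LL X P φ i).le a b := by
  rw [LL_eq]
  unfold Fstep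
  by_cases hp : IsPartialOrder (X i) (relF X P φ i (fun j _ => LL X P φ j))
  · rw [dif_pos hp, mkLin_le]
    exact (Classical.choose_spec (@extend_partialOrder _ (relF X P φ i _) hp)).2 a b
      (Or.inl hab)
  · rw [dif_neg hp, mkLin_le]
    exact (Classical.choose_spec (@extend_partialOrder _ (P i).le _)).2 a b hab

lemma ext_rel (i : I) (hp : IsPartialOrder (X i) (rel X P φ i)) (a b : X i)
    (hab : rel X P φ i a b) : (LL X P φ i).le a b := by
  unfold rel at hp hab
  rw [LL_eq]
  unfold Fstep
  rw [dif_pos hp, mkLin_le]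
  exact (Classical.choose_spec (@extend_partialOrder _ (rel X P φ i) hp)).2 a b hab

end Defs

-- helper lemmas for raw LinearOrder terms
lemma L_le_of_lt {α : Type} (L : LinearOrder α) {a b : α} (h : L.lt a b) : L.le a b := by
  letI := L; exact le_of_lt h
lemma L_lt_of_le_of_lt {α : Type} (L : LinearOrder α) {a b c : α}
    (h1 : L.le a b) (h2 : L.lt b c) : L.lt a c := by letI := L; exact lt_of_le_of_lt h1 h2
lemma L_lt_of_lt_of_le {α : Type} (L : LinearOrder α) {a b c : α}
    (h1 : L.lt a b) (h2 : L.le b c) : L.lt a c := by letI := L; exact lt_of_lt_of_le h1 h2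
lemma L_not_le_of_lt {α : Type} (L : LinearOrder α) {a b : α} (h : L.lt a b) :
    ¬ L.le b a := by letI := L; exact not_le.mpr h
lemma L_lt_of_le_of_ne {α : Type} (L : LinearOrder α) {a b : α} (h1 : L.le a b)
    (h2 : a ≠ b) : L.lt a b := by letI := L; exact lt_of_le_of_ne h1 h2
lemma L_asymm {α : Type} (L : LinearOrder α) {a b : α} (h1 : L.lt a b) (h2 : L.lt b a) :
    False := by letI := L; exact absurd h2 (lt_asymm h1)

section Main

variable (X : I → Type) (P : ∀ i, PartialOrder (X i)) (φ : ∀ i j, i ≤ j → X i → X j)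
  (hmono : ∀ i j (h : i ≤ j) (a b : X i), (P i).le a b → (P j).le (φ i j h a) (φ i j h b))
  (hcomp : ∀ i j k (hij : i ≤ j) (hjk : j ≤ k) (a : X i),
      φ j k hjk (φ i j hij a) = φ i k (hij.trans hjk) a)

include hmono hcomp in
lemma main : ∀ i : I, ∀ j (h : i < j) (a b : X i),
    (LL X P φ i).le a b → (LL X P φ j).le (φ i j h.le a) (φ i j h.le b) := by
  intro i
  induction i using ((wellFounded_gt (α := I)).induction) with
  | _ i IH =>
  -- push lemma between levels above i, from IH
  have push : ∀ (j j' : I) (hj : i < j) (hjj' : j ≤ j') (a b : X i),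
      (LL X P φ j).lt (φ i j hj.le a) (φ i j hj.le b) →
      (LL X P φ j').le (φ i j' (hj.le.trans hjj') a) (φ i j' (hj.le.trans hjj') b) := by
    intro j j' hj hjj' a b hlt
    rcases eq_or_lt_of_le hjj' with rfl | hjj'
    · exact L_le_of_lt _ hlt
    · have := IH j hj j' hjj' _ _ (L_le_of_lt _ hlt)
      rwa [hcomp, hcomp] at this
  -- the relation rel i is a partial order
  have hp : IsPartialOrder (X i) (rel X P φ i) := by
    refine { refl := fun a => Or.inl ((P i).le_refl a), trans := ?_, antisymm := ?_ }
    · intro a b c hab hbc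
      rcases hab with hab | ⟨j, hj, hab⟩
      · rcases hbc with hbc | ⟨j, hj, hbc⟩
        · exact Or.inl ((P i).le_trans _ _ _ hab hbc)
        · exact Or.inr ⟨j, hj, L_lt_of_le_of_lt _
            (ext_le X P φ j _ _ (hmono i j hj.le a b hab)) hbc⟩
      · rcases hbc with hbc | ⟨j', hj', hbc⟩
        · exact Or.inr ⟨j, hj, L_lt_of_lt_of_le _ hab
            (ext_le X P φ j _ _ (hmono i j hj.le b c hbc))⟩
        · rcases le_total j j' with hjj' | hjj'
          · exact Or.inr ⟨j', hj', L_lt_of_le_of_lt _ (push j j' hj hjj' a b hab) hbc⟩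
          · exact Or.inr ⟨j, hj, L_lt_of_lt_of_le _ hab (push j' j hj' hjj' b c hbc)⟩
    · intro a b hab hba
      rcases hab with hab | ⟨j, hj, hab⟩
      · rcases hba with hba | ⟨j, hj, hba⟩
        · exact (P i).le_antisymm _ _ hab hba
        · exact absurd (ext_le X P φ j _ _ (hmono i j hj.le a b hab))
            (L_not_le_of_lt _ hba)
      · rcases hba with hba | ⟨j', hj', hba⟩
        · exact absurd (ext_le X P φ j _ _ (hmono i j hj.le b a hba))
            (L_not_le_of_lt _ hab)
        · rcases le_total j j' with hjj' | hjj'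
          · exact absurd (L_lt_of_le_of_lt _ (push j j' hj hjj' a b hab) hba)
              (fun h => L_asymm _ h h)
          · exact absurd (L_lt_of_le_of_lt _ (push j' j hj' hjj' b a hba) hab)
              (fun h => L_asymm _ h h)
  -- now the monotonicity claim
  intro j hij a b hab
  rcases Classical.em ((LL X P φ j).le (φ i j hij.le a) (φ i j hij.le b)) with h | h
  · exact h
  · exfalso
    have hba' : (LL X P φ j).le (φ i j hij.le b) (φ i j hij.le a) :=
      ((LL X P φ j).le_total _ _).resolve_left h
    have hne : φ i j hij.le b ≠ φ i j hij.le a := fun he => h (he ▸ hba')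
    have hlt : (LL X P φ j).lt (φ i j hij.le b) (φ i j hij.le a) :=
      L_lt_of_le_of_ne _ hba' hne
    have hba : (LL X P φ i).le b a := ext_rel X P φ i hp b a (Or.inr ⟨j, hij, hlt⟩)
    have : a = b := (LL X P φ i).le_antisymm _ _ hab hba
    exact hne (by rw [this])

end Main

end Stmt13Aux

/-- Left propagation of linear extension.  Let `X` be a persistence
poset indexed by a converse well-founded linear order `I` (every nonempty subset of
`I` has a maximal element, i.e. `>` is well-founded), and suppose there is an index
`i₀` such that `X j` is empty for all `j > i₀`.  Then `X` admits a linear extension: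
compatible linear refinements of the component orders under which all structure maps
remain monotone. -/
theorem stmt_13 {I : Type} [LinearOrder I] [WellFoundedGT I]
    (X : I → Type) (P : ∀ i, PartialOrder (X i))
    (φ : ∀ i j, i ≤ j → X i → X j)
    (hmono : ∀ i j (h : i ≤ j) (a b : X i), (P i).le a b → (P j).le (φ i j h a) (φ i j h b))
    (hid : ∀ i (a : X i), φ i i le_rfl a = a)
    (hcomp : ∀ i j k (hij : i ≤ j) (hjk : j ≤ k) (a : X i),
      φ j k hjk (φ i j hij a) = φ i k (hij.trans hjk) a)
    (i₀ : I) (hempty : ∀ j, i₀ < j → IsEmpty (X j)) :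
    ∃ L : ∀ i, LinearOrder (X i),
      (∀ i (a b : X i), (P i).le a b → (L i).le a b) ∧
      (∀ i j (h : i ≤ j) (a b : X i), (L i).le a b → (L j).le (φ i j h a) (φ i j h b)) := by
  refine ⟨LL X P φ, fun i a b hab => ext_le X P φ i a b hab, ?_⟩
  intro i j h a b hab
  rcases eq_or_lt_of_le h with rfl | hlt
  · have e1 : φ i i h a = a := by rw [show h = le_rfl from rfl] at *; exact hid i a
    have e2 : φ i i h b = b := by exact hid i b
    rw [e1, e2]; exact hab
  · exact main X P φ hmono hcomp i j hlt a b hab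
end
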